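/- Let H be a strictly 2-balanced graph with m_2(H) > 1. There exists a constant D = D(H) such that for every C > 0 and every sufficiently small c > 0 (depending on C and H), setting n := ⌊c·(k/\log k)^{m_2(H)}⌋ and p := C(\log k)/k, the probability that Δ^{(2)}_H ≥ D tends to 0 as k → ∞. -/

import Mathlib

open Finset Filter
open scoped Classical

noncomputable section

/-- The potential edges (unordered pairs of distinct vertices) of the complete graph on `Fin n`. -/
def allEdges (n : ℕ) : Finset (Sym2 (Fin n)) :=
  Finset.univ.filter fun e => ¬ e.IsDiag

/-- The probability that the binomial random graph `G_{n,p}` (a uniformly random subset of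
`allEdges n`, each potential edge present independently with probability `p`) lies in `A`. -/
def gnpProb (n : ℕ) (p : ℝ) (A : Set (Finset (Sym2 (Fin n)))) : ℝ :=
  ∑ G ∈ (allEdges n).powerset,
    if G ∈ A then p ^ G.card * (1 - p) ^ ((allEdges n).card - G.card) else 0

/-- The vertices covered by a finite set of edges. -/
def edgeSupport {V : Type*} [Fintype V] (S : Finset (Sym2 V)) : Finset V :=
  Finset.univ.filter fun v => ∃ e ∈ S, v ∈ e

/-- The 2-density value `(e_F - 1)/(v_F - 2)` of the subgraph `F` spanned by the edge set `S`
(with vertex set the support of `S`), which is `1/2` when `F = K₂`. -/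
def m2value {V : Type*} [Fintype V] (S : Finset (Sym2 V)) : ℝ :=
  if 3 ≤ (edgeSupport S).card then
    ((S.card : ℝ) - 1) / ((edgeSupport S).card - 2)
  else (1 : ℝ) / 2

/-- The maximum 2-density over all subgraphs spanned by nonempty finite subsets of the
edge set `T`. -/
def m2set {V : Type*} [Fintype V] (T : Set (Sym2 V)) : ℝ :=
  sSup {q | ∃ S : Finset (Sym2 V), S.Nonempty ∧ ↑S ⊆ T ∧ q = m2value S}

/-- `m₂(H)`: the maximum of `(e_F - 1)/(v_F - 2)` (resp. `1/2` for `F = K₂`) over all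
subgraphs `F ⊆ H` with at least one edge. -/
def m2 {V : Type*} [Fintype V] (H : SimpleGraph V) : ℝ :=
  m2set H.edgeSet

/-- `H` is strictly 2-balanced: it has an edge and `m₂(F) < m₂(H)` for every proper
subgraph `F ⊊ H` with at least one edge. -/
def StrictlyTwoBalanced {V : Type*} [Fintype V] (H : SimpleGraph V) : Prop :=
  H.edgeSet.Nonempty ∧
    ∀ F : H.Subgraph, F ≠ ⊤ → F.edgeSet.Nonempty → m2set F.edgeSet < m2 H

/-- `P = (W, S)` is a copy of `H` in the edge set `G`: `W` and `S` are the images of the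
vertices and edges of `H` under an injection whose edge-image lies in `G`. -/
def IsCopyPair {h n : ℕ} (H : SimpleGraph (Fin h)) (G : Finset (Sym2 (Fin n)))
    (P : Finset (Fin n) × Finset (Sym2 (Fin n))) : Prop :=
  ∃ φ : Fin h ↪ Fin n,
    P.1 = Finset.univ.image ⇑φ ∧
    (↑P.2 : Set (Sym2 (Fin n))) = Sym2.map ⇑φ '' H.edgeSet ∧
    P.2 ⊆ G

/-- The collection of all copies of `H` in the edge set `G`. -/
def copies {h n : ℕ} (H : SimpleGraph (Fin h)) (G : Finset (Sym2 (Fin n))) :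
    Finset (Finset (Fin n) × Finset (Sym2 (Fin n))) :=
  Finset.univ.filter (IsCopyPair H G)

/-- `Δ²_H`: the maximum over pairs of distinct potential edges `f ≠ g` of the number of
copies of `H` in `G` containing both `f` and `g`. -/
def deltaH2 {h n : ℕ} (H : SimpleGraph (Fin h)) (G : Finset (Sym2 (Fin n))) : ℕ :=
  ((allEdges n ×ˢ allEdges n).filter fun fg => fg.1 ≠ fg.2).sup fun fg =>
    ((copies H G).filter fun P => fg.1 ∈ P.2 ∧ fg.2 ∈ P.2).card

-- ===== auxiliary development =====


variable {V : Type*} [Fintype V]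

lemma mem_edgeSupport {S : Finset (Sym2 V)} {v : V} :
    v ∈ edgeSupport S ↔ ∃ e ∈ S, v ∈ e := by
  simp [edgeSupport]

lemma edgeSupport_mono {S T : Finset (Sym2 V)} (h : S ⊆ T) :
    edgeSupport S ⊆ edgeSupport T := by
  intro v hv
  rw [mem_edgeSupport] at hv ⊢
  obtain ⟨e, he, hve⟩ := hv
  exact ⟨e, h he, hve⟩

lemma edgeSupport_union [DecidableEq V] {S T : Finset (Sym2 V)} :
    edgeSupport (S ∪ T) = edgeSupport S ∪ edgeSupport T := by
  ext v
  simp only [mem_edgeSupport, Finset.mem_union]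
  constructor
  · rintro ⟨e, he | he, hv⟩
    · exact Or.inl ⟨e, he, hv⟩
    · exact Or.inr ⟨e, he, hv⟩
  · rintro (⟨e, he, hv⟩ | ⟨e, he, hv⟩)
    · exact ⟨e, Or.inl he, hv⟩
    · exact ⟨e, Or.inr he, hv⟩

lemma m2set_finite (T : Set (Sym2 V)) :
    {q | ∃ S : Finset (Sym2 V), S.Nonempty ∧ ↑S ⊆ T ∧ q = m2value S}.Finite := by
  have : {q | ∃ S : Finset (Sym2 V), S.Nonempty ∧ ↑S ⊆ T ∧ q = m2value S}
      ⊆ Set.range (m2value (V := V)) := by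
    rintro q ⟨S, _, _, rfl⟩
    exact ⟨S, rfl⟩
  exact (Set.finite_range _).subset this

lemma m2value_le_m2set {S : Finset (Sym2 V)} {T : Set (Sym2 V)}
    (hne : S.Nonempty) (hsub : ↑S ⊆ T) : m2value S ≤ m2set T :=
  le_csSup (m2set_finite T).bddAbove ⟨S, hne, hsub, rfl⟩

lemma exists_m2set_eq (T : Set (Sym2 V)) (hT : T.Nonempty) :
    ∃ S : Finset (Sym2 V), S.Nonempty ∧ ↑S ⊆ T ∧ m2set T = m2value S := by
  obtain ⟨e, he⟩ := hT
  have hne : {q | ∃ S : Finset (Sym2 V), S.Nonempty ∧ ↑S ⊆ T ∧ q = m2value S}.Nonempty := by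
    refine ⟨m2value {e}, {e}, Finset.singleton_nonempty e, ?_, rfl⟩
    simpa using he
  have := hne.csSup_mem (m2set_finite T)
  exact this

/-- two distinct non-diagonal edges span at least 3 vertices -/
lemma three_le_card_edgeSupport [DecidableEq V] {S : Finset (Sym2 V)} {f g : Sym2 V}
    (hf : f ∈ S) (hg : g ∈ S) (hfg : f ≠ g) (h1 : ¬ f.IsDiag) (h2 : ¬ g.IsDiag) :
    3 ≤ (edgeSupport S).card := by
  induction f with
  | _ a b =>
  induction g with
  | _ c d =>
  have hab : a ≠ b := by simpa using h1
  have hcd : c ≠ d := by simpa using h2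
  by_contra hlt
  push_neg at hlt
  have habS : ({a, b} : Finset V) ⊆ edgeSupport S := by
    intro v hv
    rw [mem_edgeSupport]
    refine ⟨s(a, b), hf, ?_⟩
    simp only [Finset.mem_insert, Finset.mem_singleton] at hv
    rcases hv with rfl | rfl <;> simp
  have hcdS : ({c, d} : Finset V) ⊆ edgeSupport S := by
    intro v hv
    rw [mem_edgeSupport]
    refine ⟨s(c, d), hg, ?_⟩
    simp only [Finset.mem_insert, Finset.mem_singleton] at hv
    rcases hv with rfl | rfl <;> simp
  have hcard : ({a, b} : Finset V).card = 2 := Finset.card_pair hab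
  have heq : ({a, b} : Finset V) = edgeSupport S := by
    apply Finset.eq_of_subset_of_card_le habS
    omega
  have hc : c ∈ ({a, b} : Finset V) := heq ▸ hcdS (by simp)
  have hd : d ∈ ({a, b} : Finset V) := heq ▸ hcdS (by simp)
  simp only [Finset.mem_insert, Finset.mem_singleton] at hc hd
  apply hfg
  rcases hc with rfl | rfl <;> rcases hd with rfl | rfl <;>
    first
    | exact absurd rfl hcd
    | simp [Sym2.eq_swap]



section HFacts
variable {h : ℕ} {H : SimpleGraph (Fin h)}

/-- proper nonempty edge subsets have small m2value -/
lemma m2value_lt_m2 (hH : StrictlyTwoBalanced H) {S : Finset (Sym2 (Fin h))}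
    (hne : S.Nonempty) (hsub : ↑S ⊆ H.edgeSet) (hpr : (↑S : Set (Sym2 (Fin h))) ≠ H.edgeSet) :
    m2value S < m2 H := by
  set F : H.Subgraph :=
    { verts := Set.univ
      Adj := fun a b => H.Adj a b ∧ s(a, b) ∈ S
      adj_sub := fun hab => hab.1
      edge_vert := fun _ => Set.mem_univ _
      symm := ⟨fun a b hab => ⟨hab.1.symm, by rw [Sym2.eq_swap]; exact hab.2⟩⟩ } with hF
  have hedge : F.edgeSet = ↑S := by
    ext e
    induction e with
    | _ a b =>
      simp only [SimpleGraph.Subgraph.mem_edgeSet, hF]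
      constructor
      · rintro ⟨-, hs⟩; exact hs
      · intro hs
        exact ⟨(H.mem_edgeSet).1 (hsub hs), hs⟩
  have hFne : F ≠ ⊤ := by
    intro hFtop
    apply hpr
    rw [← hedge, hFtop, SimpleGraph.Subgraph.edgeSet_top]
  have := hH.2 F hFne (by rw [hedge]; exact_mod_cast hne.to_set)
  rw [hedge] at this
  exact lt_of_le_of_lt (m2value_le_m2set hne (by exact fun x hx => hx)) this

lemma no_isolated (hH : StrictlyTwoBalanced H) (v : Fin h) :
    ∃ e ∈ H.edgeFinset, v ∈ e := by
  by_contra hiso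
  push_neg at hiso
  have hadj : ∀ w, ¬ H.Adj v w := by
    intro w hw
    exact hiso s(v, w) (by rwa [SimpleGraph.mem_edgeFinset, SimpleGraph.mem_edgeSet]) (by simp)
  set F : H.Subgraph :=
    { verts := {v}ᶜ
      Adj := H.Adj
      adj_sub := id
      edge_vert := by
        intro a b hab
        simp only [Set.mem_compl_iff, Set.mem_singleton_iff]
        rintro rfl
        exact hadj b hab
      symm := ⟨fun a b hab => hab.symm⟩ } with hF
  have hedge : F.edgeSet = H.edgeSet := rfl
  have hFne : F ≠ ⊤ := by
    intro hFtop
    have : v ∈ F.verts := by rw [hFtop]; trivial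
    simp [hF] at this
  have := hH.2 F hFne (by rw [hedge]; exact hH.1)
  rw [hedge] at this
  exact lt_irrefl _ this
end HFacts

section HFacts2
variable {h : ℕ} {H : SimpleGraph (Fin h)}

lemma edgeSupport_edgeFinset (hH : StrictlyTwoBalanced H) :
    edgeSupport H.edgeFinset = Finset.univ := by
  ext v
  simp only [Finset.mem_univ, iff_true, mem_edgeSupport]
  exact no_isolated hH v

lemma m2_eq_m2value (hH : StrictlyTwoBalanced H) : m2 H = m2value H.edgeFinset := by
  obtain ⟨S, hne, hsub, heq⟩ := exists_m2set_eq H.edgeSet hH.1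
  rcases eq_or_ne (↑S : Set (Sym2 (Fin h))) H.edgeSet with hcase | hcase
  · have : S = H.edgeFinset := by
      apply Finset.coe_injective
      rw [hcase, SimpleGraph.coe_edgeFinset]
    rw [m2, heq, this]
  · exact absurd (heq ▸ m2value_lt_m2 hH hne hsub hcase) (lt_irrefl _)

lemma three_le_h (hH : StrictlyTwoBalanced H) (hm : 1 < m2 H) : 3 ≤ h := by
  by_contra hlt
  push_neg at hlt
  have hsupp : (edgeSupport H.edgeFinset).card ≤ h := by
    calc (edgeSupport H.edgeFinset).card ≤ (Finset.univ : Finset (Fin h)).card :=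
          Finset.card_le_card (Finset.subset_univ _)
      _ = h := by simp
  have : m2 H = 1 / 2 := by
    rw [m2_eq_m2value hH, m2value, if_neg (by omega)]
  rw [this] at hm; norm_num at hm

lemma supp_edgeFinset_card (hH : StrictlyTwoBalanced H) :
    (edgeSupport H.edgeFinset).card = h := by
  rw [edgeSupport_edgeFinset hH]; simp

lemma m2_formula (hH : StrictlyTwoBalanced H) (hm : 1 < m2 H) :
    m2 H = ((H.edgeFinset.card : ℝ) - 1) / ((h : ℝ) - 2) := by
  rw [m2_eq_m2value hH, m2value, supp_edgeFinset_card hH,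
    if_pos (three_le_h hH hm)]

lemma m2_mul (hH : StrictlyTwoBalanced H) (hm : 1 < m2 H) :
    m2 H * ((h : ℝ) - 2) = (H.edgeFinset.card : ℝ) - 1 := by
  have h3 := three_le_h hH hm
  rw [m2_formula hH hm, div_mul_cancel₀]
  have : (3 : ℝ) ≤ (h : ℝ) := by exact_mod_cast h3
  linarith

lemma three_le_e (hH : StrictlyTwoBalanced H) (hm : 1 < m2 H) :
    3 ≤ H.edgeFinset.card := by
  have h3 := three_le_h hH hm
  have h3' : (3 : ℝ) ≤ (h : ℝ) := by exact_mod_cast h3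
  have hmul := m2_mul hH hm
  have : (1 : ℝ) * ((h : ℝ) - 2) < m2 H * ((h : ℝ) - 2) := by
    apply mul_lt_mul_of_pos_right hm; linarith
  rw [hmul, one_mul] at this
  have : ((h : ℝ) : ℝ) - 1 < (H.edgeFinset.card : ℝ) := by linarith
  have hlt : (h : ℝ) < (H.edgeFinset.card : ℝ) + 1 := by linarith
  have : h < H.edgeFinset.card + 1 := by exact_mod_cast hlt
  omega

end HFacts2

/-- The collection of proper edge subsets with at least 2 edges. -/
def badSets {h : ℕ} (H : SimpleGraph (Fin h)) : Finset (Finset (Sym2 (Fin h))) :=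
  H.edgeFinset.powerset.filter fun S => 2 ≤ S.card ∧ S ≠ H.edgeFinset

/-- The uniform gap δ > 0. -/
def deltaConst {h : ℕ} (H : SimpleGraph (Fin h)) : ℝ :=
  if hne : (badSets H).Nonempty then
    (badSets H).inf' hne fun S => m2 H * (((edgeSupport S).card : ℝ) - 2) - ((S.card : ℝ) - 1)
  else 1

section DeltaFacts
variable {h : ℕ} {H : SimpleGraph (Fin h)}

lemma badSets_nonempty (hH : StrictlyTwoBalanced H) (hm : 1 < m2 H) :
    (badSets H).Nonempty := by
  obtain ⟨S, hS, hcard⟩ := Finset.exists_subset_card_eq (show 2 ≤ H.edgeFinset.card by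
    have := three_le_e hH hm; omega)
  refine ⟨S, ?_⟩
  rw [badSets, Finset.mem_filter, Finset.mem_powerset]
  refine ⟨hS, by omega, ?_⟩
  intro hSe
  rw [hSe] at hcard
  have := three_le_e hH hm
  omega

lemma mem_badSets_facts (hH : StrictlyTwoBalanced H) {S : Finset (Sym2 (Fin h))}
    (hS : S ∈ badSets H) :
    3 ≤ (edgeSupport S).card ∧
      ((S.card : ℝ) - 1) < m2 H * (((edgeSupport S).card : ℝ) - 2) := by
  rw [badSets, Finset.mem_filter, Finset.mem_powerset] at hS
  obtain ⟨hsub, h2, hne⟩ := hS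
  obtain ⟨f, hf, g, hg, hfg⟩ := Finset.one_lt_card.1 (by omega : 1 < S.card)
  have hnd : ∀ e ∈ S, ¬ e.IsDiag := by
    intro e he
    have : e ∈ H.edgeSet := by
      have := hsub he
      rwa [SimpleGraph.mem_edgeFinset] at this
    exact SimpleGraph.not_isDiag_of_mem_edgeSet H this
  have h3 : 3 ≤ (edgeSupport S).card :=
    three_le_card_edgeSupport hf hg hfg (hnd f hf) (hnd g hg)
  refine ⟨h3, ?_⟩
  have hlt : m2value S < m2 H := by
    apply m2value_lt_m2 hH ⟨f, hf⟩
    · rw [← SimpleGraph.coe_edgeFinset]; exact_mod_cast hsub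
    · intro hcoe
      apply hne
      apply Finset.coe_injective
      rw [hcoe, SimpleGraph.coe_edgeFinset]
  rw [m2value, if_pos h3] at hlt
  have hpos : (0 : ℝ) < ((edgeSupport S).card : ℝ) - 2 := by
    have : (3 : ℝ) ≤ ((edgeSupport S).card : ℝ) := by exact_mod_cast h3
    linarith
  calc ((S.card : ℝ) - 1) = (((S.card : ℝ) - 1) / (((edgeSupport S).card : ℝ) - 2))
        * (((edgeSupport S).card : ℝ) - 2) := by field_simp
    _ < m2 H * (((edgeSupport S).card : ℝ) - 2) := by
        apply mul_lt_mul_of_pos_right hlt hpos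

lemma deltaConst_pos (hH : StrictlyTwoBalanced H) (hm : 1 < m2 H) :
    0 < deltaConst H := by
  rw [deltaConst, dif_pos (badSets_nonempty hH hm)]
  rw [Finset.lt_inf'_iff]
  intro S hS
  have := (mem_badSets_facts hH hS).2
  linarith

lemma deltaConst_le (hH : StrictlyTwoBalanced H) (hm : 1 < m2 H)
    {S : Finset (Sym2 (Fin h))} (hS : S ∈ badSets H) :
    deltaConst H ≤ m2 H * (((edgeSupport S).card : ℝ) - 2) - ((S.card : ℝ) - 1) := by
  rw [deltaConst, dif_pos (badSets_nonempty hH hm)]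
  exact Finset.inf'_le _ hS

end DeltaFacts

/-- number of copies needed in the chain. -/
def sConst {h : ℕ} (H : SimpleGraph (Fin h)) : ℕ := ⌈2 * m2 H / deltaConst H⌉₊ + 1

def KConst {h : ℕ} (H : SimpleGraph (Fin h)) : ℕ := sConst H * h


section CopyFacts
variable {h n : ℕ} {H : SimpleGraph (Fin h)} {G : Finset (Sym2 (Fin n))}

lemma edgeSupport_image {V W : Type*} [Fintype V] [Fintype W] [DecidableEq W]
    (φ : V → W) (hφ : Function.Injective φ) (S : Finset (Sym2 V)) :
    edgeSupport (S.image (Sym2.map φ)) = (edgeSupport S).image φ := by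
  ext w
  simp only [mem_edgeSupport, Finset.mem_image]
  constructor
  · rintro ⟨e', ⟨e, heS, rfl⟩, hwe'⟩
    rw [Sym2.mem_map] at hwe'
    obtain ⟨a, hae, rfl⟩ := hwe'
    exact ⟨a, ⟨e, heS, hae⟩, rfl⟩
  · rintro ⟨v, ⟨e, heS, hve⟩, rfl⟩
    exact ⟨Sym2.map φ e, ⟨e, heS, rfl⟩, Sym2.mem_map.2 ⟨v, hve, rfl⟩⟩

lemma copy_edges_eq {P : Finset (Fin n) × Finset (Sym2 (Fin n))} (φ : Fin h ↪ Fin n)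
    (hP2 : (↑P.2 : Set (Sym2 (Fin n))) = Sym2.map ⇑φ '' H.edgeSet) :
    P.2 = H.edgeFinset.image (Sym2.map ⇑φ) := by
  apply Finset.coe_injective
  rw [hP2, Finset.coe_image, SimpleGraph.coe_edgeFinset]

lemma copy_edges_card {P : Finset (Fin n) × Finset (Sym2 (Fin n))} {φ : Fin h ↪ Fin n}
    (hP2 : P.2 = H.edgeFinset.image (Sym2.map ⇑φ)) :
    P.2.card = H.edgeFinset.card := by
  rw [hP2]
  exact Finset.card_image_of_injective _ (Sym2.map.injective φ.injective)

lemma copy_supp (hH : StrictlyTwoBalanced H) {P : Finset (Fin n) × Finset (Sym2 (Fin n))} {φ : Fin h ↪ Fin n}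
    (hP2 : P.2 = H.edgeFinset.image (Sym2.map ⇑φ)) :
    edgeSupport P.2 = Finset.univ.image ⇑φ := by
  rw [hP2, edgeSupport_image _ φ.injective, edgeSupport_edgeFinset hH]

lemma copy_supp_card (hH : StrictlyTwoBalanced H) {P : Finset (Fin n) × Finset (Sym2 (Fin n))} {φ : Fin h ↪ Fin n}
    (hP2 : P.2 = H.edgeFinset.image (Sym2.map ⇑φ)) :
    (edgeSupport P.2).card = h := by
  rw [copy_supp hH hP2, Finset.card_image_of_injective _ φ.injective]
  simp

/-- Main step estimate: a proper sub-edge-set of a copy with at least 2 edges gives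
the δ gain. -/
lemma copy_step (hH : StrictlyTwoBalanced H) (hm : 1 < m2 H)
    {P : Finset (Fin n) × Finset (Sym2 (Fin n))} {φ : Fin h ↪ Fin n}
    (hP2 : P.2 = H.edgeFinset.image (Sym2.map ⇑φ))
    {F : Finset (Sym2 (Fin n))} (hFP : F ⊆ P.2) (hne : F ≠ P.2) (h2 : 2 ≤ F.card) :
    m2 H * ((h : ℝ) - ((edgeSupport F).card : ℝ)) + deltaConst H
      ≤ (H.edgeFinset.card : ℝ) - (F.card : ℝ) := by
  classical
  set S' : Finset (Sym2 (Fin h)) := H.edgeFinset.filter (fun e => Sym2.map ⇑φ e ∈ F) with hS'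
  have himg : S'.image (Sym2.map ⇑φ) = F := by
    apply Finset.Subset.antisymm
    · intro x hx
      rw [Finset.mem_image] at hx
      obtain ⟨e, he, rfl⟩ := hx
      exact (Finset.mem_filter.1 he).2
    · intro x hx
      have : x ∈ P.2 := hFP hx
      rw [hP2, Finset.mem_image] at this
      obtain ⟨e, he, rfl⟩ := this
      exact Finset.mem_image_of_mem _ (Finset.mem_filter.2 ⟨he, hx⟩)
  have hcard : S'.card = F.card := by
    rw [← himg, Finset.card_image_of_injective _ (Sym2.map.injective φ.injective)]
  have hsupp : ((edgeSupport S').card : ℕ) = (edgeSupport F).card := by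
    rw [← himg, edgeSupport_image _ φ.injective,
      Finset.card_image_of_injective _ φ.injective]
  have hS'mem : S' ∈ badSets H := by
    rw [badSets, Finset.mem_filter, Finset.mem_powerset]
    refine ⟨Finset.filter_subset _ _, by omega, ?_⟩
    intro hSe
    apply hne
    rw [← himg, hSe, ← hP2]
  have hδ := deltaConst_le hH hm hS'mem
  have hmul := m2_mul hH hm
  have hsupple : (edgeSupport S').card ≤ h := by
    calc (edgeSupport S').card ≤ (Finset.univ : Finset (Fin h)).card :=
        Finset.card_le_card (Finset.subset_univ _)
      _ = h := by simp
  have hsc : ((edgeSupport S').card : ℝ) = ((edgeSupport F).card : ℝ) := by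
    exact_mod_cast hsupp
  have hcc : ((S'.card : ℝ)) = (F.card : ℝ) := by exact_mod_cast hcard
  nlinarith [hδ, hmul, hsc, hcc]

end CopyFacts

section Extract
variable {h : ℕ} {H : SimpleGraph (Fin h)}

/-- At most `u^h` copies have all edges inside `E`, where `u = |supp E|`. -/
lemma card_copies_subset (hH : StrictlyTwoBalanced H) {n : ℕ}
    {G E : Finset (Sym2 (Fin n))} :
    ((copies H G).filter fun P => P.2 ⊆ E).card ≤ (edgeSupport E).card ^ h := by
  classical
  set T := ((copies H G).filter fun P => P.2 ⊆ E) with hT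
  have hmap : ∀ P ∈ T, ∃ φ : Fin h ↪ Fin n,
      P.2 = H.edgeFinset.image (Sym2.map ⇑φ) ∧ P.1 = Finset.univ.image ⇑φ ∧
      ∀ x, φ x ∈ edgeSupport E := by
    intro P hP
    rw [hT, Finset.mem_filter] at hP
    obtain ⟨hPc, hPe⟩ := hP
    rw [copies, Finset.mem_filter] at hPc
    obtain ⟨-, φ, h1, h2, h3⟩ := hPc
    have h2' := copy_edges_eq φ h2
    refine ⟨φ, h2', h1, ?_⟩
    intro x
    have : φ x ∈ edgeSupport P.2 := by
      rw [copy_supp hH h2']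
      exact Finset.mem_image_of_mem _ (Finset.mem_univ x)
    exact edgeSupport_mono hPe this
  choose Φ hΦ using hmap
  rcases Finset.eq_empty_or_nonempty T with hTe | ⟨P₀, hP₀⟩
  · rw [hTe]; simp
  have hNE : Nonempty {v // v ∈ edgeSupport E} := by
    rcases Nat.eq_zero_or_pos h with h0 | hpos
    · -- h = 0 : then T.card ≤ 1 handled below differently; get nonempty not possible;
      -- but Fin h empty so functions exist anyway; we supply a junk via P₀'s φ at... impossible.
      -- Instead show supp E nonempty can fail only if no copies use vertices; but h = 0 means
      -- H has no edges, contradicting hH.1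
      exfalso
      obtain ⟨e, he⟩ := hH.1
      induction e with
      | _ a b =>
        have := a.isLt
        omega
    · exact ⟨_, (hΦ P₀ hP₀).2.2 ⟨0, hpos⟩⟩
  have hinj : ∀ (P) (hP : P ∈ T) (Q) (hQ : Q ∈ T),
      (fun x => (⟨Φ P hP x, (hΦ P hP).2.2 x⟩ : {v // v ∈ edgeSupport E}))
        = (fun x => (⟨Φ Q hQ x, (hΦ Q hQ).2.2 x⟩ : {v // v ∈ edgeSupport E}))
      → P = Q := by
    intro P hP Q hQ heq
    have hfun : ⇑(Φ P hP) = ⇑(Φ Q hQ) := by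
      funext x
      have := congrFun heq x
      exact congrArg Subtype.val this
    have h1 : P.1 = Q.1 := by rw [(hΦ P hP).2.1, (hΦ Q hQ).2.1, hfun]
    have h2 : P.2 = Q.2 := by rw [(hΦ P hP).1, (hΦ Q hQ).1, hfun]
    exact Prod.ext h1 h2
  calc T.card ≤ Fintype.card (Fin h → {v // v ∈ edgeSupport E}) := by
        classical
        apply Finset.card_le_card_of_injOn
          (fun P => if hP : P ∈ T then
            (fun x => (⟨Φ P hP x, (hΦ P hP).2.2 x⟩ : {v // v ∈ edgeSupport E}))
            else fun _ => Classical.arbitrary _)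
        · intro P hP; exact Finset.mem_univ _
        · intro P hP Q hQ heq
          simp only [Finset.mem_coe] at hP hQ
          simp only [dif_pos hP, dif_pos hQ] at heq
          exact hinj P hP Q hQ heq
    _ = (edgeSupport E).card ^ h := by
        rw [Fintype.card_fun]
        simp [Fintype.card_coe]

end Extract

def badEdgeSets {h : ℕ} (H : SimpleGraph (Fin h)) (n : ℕ) : Finset (Finset (Sym2 (Fin n))) :=
  (allEdges n).powerset.filter fun E =>
    3 ≤ (edgeSupport E).card ∧ (edgeSupport E).card ≤ KConst H ∧
      m2 H * (((edgeSupport E).card : ℝ) - 2) + 1 + ((sConst H : ℝ) - 1) * deltaConst H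
        ≤ (E.card : ℝ)

section ExtractMain
variable {h : ℕ} {H : SimpleGraph (Fin h)}

lemma extract (hH : StrictlyTwoBalanced H) (hm : 1 < m2 H) {n : ℕ}
    {G : Finset (Sym2 (Fin n))} (hG : G ⊆ allEdges n)
    (hD : (KConst H) ^ h + 1 ≤ deltaH2 H G) :
    ∃ E ∈ badEdgeSets H n, E ⊆ G := by
  classical
  have hm2nn : (0 : ℝ) ≤ m2 H := le_of_lt (lt_trans one_pos hm)
  -- find the pair of edges attaining a large count
  have hfg : ∃ fg ∈ (allEdges n ×ˢ allEdges n).filter fun fg => fg.1 ≠ fg.2,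
      (KConst H) ^ h + 1
        ≤ ((copies H G).filter fun P => fg.1 ∈ P.2 ∧ fg.2 ∈ P.2).card := by
    by_contra hcon
    push_neg at hcon
    have : deltaH2 H G ≤ (KConst H) ^ h := by
      rw [deltaH2]
      apply Finset.sup_le
      intro fg hfgmem
      have := hcon fg hfgmem
      omega
    omega
  obtain ⟨fg, hfgmem, hbig⟩ := hfg
  rw [Finset.mem_filter, Finset.mem_product] at hfgmem
  obtain ⟨⟨hf1, hg1⟩, hfgne⟩ := hfgmem
  set f := fg.1
  set g := fg.2
  set 𝒞 := (copies H G).filter fun P => f ∈ P.2 ∧ g ∈ P.2 with h𝒞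
  -- basic facts about members of 𝒞
  have hcopy : ∀ P ∈ 𝒞, ∃ φ : Fin h ↪ Fin n,
      P.2 = H.edgeFinset.image (Sym2.map ⇑φ) ∧ P.2 ⊆ G ∧ f ∈ P.2 ∧ g ∈ P.2 := by
    intro P hP
    rw [h𝒞, Finset.mem_filter] at hP
    obtain ⟨hPc, hPf, hPg⟩ := hP
    rw [copies, Finset.mem_filter] at hPc
    obtain ⟨-, φ, h1, h2, h3⟩ := hPc
    exact ⟨φ, copy_edges_eq φ h2, h3, hPf, hPg⟩
  -- the chain construction
  have chain : ∀ i : ℕ, i + 1 ≤ sConst H → ∃ E : Finset (Sym2 (Fin n)),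
      E ⊆ G ∧ f ∈ E ∧ g ∈ E ∧ (edgeSupport E).card ≤ (i + 1) * h ∧
      m2 H * (((edgeSupport E).card : ℝ) - 2) + 1 + (i : ℝ) * deltaConst H
        ≤ (E.card : ℝ) := by
    intro i
    induction i with
    | zero =>
      intro _
      have h𝒞ne : 𝒞.Nonempty := Finset.card_pos.1 (by omega)
      obtain ⟨P, hP⟩ := h𝒞ne
      obtain ⟨φ, hP2, hPG, hPf, hPg⟩ := hcopy P hP
      refine ⟨P.2, hPG, hPf, hPg, ?_, ?_⟩
      · rw [copy_supp_card hH hP2]; omega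
      · rw [copy_supp_card hH hP2, copy_edges_card hP2]
        have := m2_mul hH hm
        simp only [Nat.cast_zero, zero_mul, add_zero]
        linarith
    | succ i ih =>
      intro hsle
      obtain ⟨E, hEG, hEf, hEg, hEsupp, hEcard⟩ := ih (by omega)
      -- a copy escaping E
      have hesc : ∃ P ∈ 𝒞, ¬ P.2 ⊆ E := by
        by_contra hcon
        push_neg at hcon
        have hsub : 𝒞 ⊆ (copies H G).filter fun P => P.2 ⊆ E := by
          intro P hP
          rw [Finset.mem_filter]
          refine ⟨(Finset.mem_filter.1 hP).1, hcon P hP⟩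
        have h1 : 𝒞.card ≤ (edgeSupport E).card ^ h :=
          le_trans (Finset.card_le_card hsub) (card_copies_subset hH)
        have h2 : (edgeSupport E).card ^ h ≤ (KConst H) ^ h := by
          apply Nat.pow_le_pow_left
          calc (edgeSupport E).card ≤ (i + 1) * h := hEsupp
            _ ≤ sConst H * h := by
                apply Nat.mul_le_mul_right; omega
        omega
      obtain ⟨P, hP, hPnsub⟩ := hesc
      obtain ⟨φ, hP2, hPG, hPf, hPg⟩ := hcopy P hP
      set F := P.2 ∩ E with hF
      have hFP : F ⊆ P.2 := Finset.inter_subset_left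
      have hFE : F ⊆ E := Finset.inter_subset_right
      have hFne : F ≠ P.2 := by
        intro hcon
        exact hPnsub (by rwa [Finset.inter_eq_left] at hcon)
      have hfF : f ∈ F := Finset.mem_inter.2 ⟨hPf, hEf⟩
      have hgF : g ∈ F := Finset.mem_inter.2 ⟨hPg, hEg⟩
      have h2F : 2 ≤ F.card := Finset.one_lt_card.2 ⟨f, hfF, g, hgF, hfgne⟩
      have hstep := copy_step hH hm hP2 hFP hFne h2F
      set E' := E ∪ P.2 with hE'
      -- cardinality identity
      have hcard : E'.card + F.card = E.card + P.2.card := by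
        rw [hE', hF, Finset.inter_comm]
        exact Finset.card_union_add_card_inter E P.2
      -- support bounds
      have hsuppF_P : edgeSupport F ⊆ edgeSupport P.2 := edgeSupport_mono hFP
      have hsuppF_E : edgeSupport F ⊆ edgeSupport E := edgeSupport_mono hFE
      have hsuppP : (edgeSupport P.2).card = h := copy_supp_card hH hP2
      have hsupp' : (edgeSupport E').card
          ≤ (edgeSupport E).card + (h - (edgeSupport F).card) := by
        rw [hE', edgeSupport_union]
        calc (edgeSupport E ∪ edgeSupport P.2).card
            ≤ (edgeSupport E).card + (edgeSupport P.2 \ edgeSupport E).card := by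
              rw [← Finset.card_union_of_disjoint Finset.disjoint_sdiff]
              apply Finset.card_le_card
              rw [Finset.union_sdiff_self_eq_union]
          _ ≤ (edgeSupport E).card + (edgeSupport P.2 \ edgeSupport F).card := by
              apply Nat.add_le_add_left
              apply Finset.card_le_card
              exact Finset.sdiff_subset_sdiff (le_refl _) hsuppF_E
          _ = (edgeSupport E).card + (h - (edgeSupport F).card) := by
              rw [Finset.card_sdiff_of_subset hsuppF_P, hsuppP]
      have hvFh : (edgeSupport F).card ≤ h := by
        calc (edgeSupport F).card ≤ (edgeSupport P.2).card :=
            Finset.card_le_card hsuppF_P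
          _ = h := hsuppP
      refine ⟨E', Finset.union_subset hEG hPG, Finset.mem_union_left _ hEf,
        Finset.mem_union_left _ hEg, ?_, ?_⟩
      · -- support bound
        calc (edgeSupport E').card ≤ (edgeSupport E).card + (h - (edgeSupport F).card) :=
            hsupp'
          _ ≤ (i + 1) * h + h := by omega
          _ = (i + 1 + 1) * h := by ring
      · -- density bound
        have hcardR : (E'.card : ℝ) = (E.card : ℝ) + (P.2.card : ℝ) - (F.card : ℝ) := by
          have hc : (E'.card : ℝ) + (F.card : ℝ) = (E.card : ℝ) + (P.2.card : ℝ) := by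
            exact_mod_cast hcard
          linarith
        have hPe : (P.2.card : ℝ) = (H.edgeFinset.card : ℝ) := by
          exact_mod_cast copy_edges_card hP2
        have hsuppR : ((edgeSupport E').card : ℝ)
            ≤ ((edgeSupport E).card : ℝ) + ((h : ℝ) - ((edgeSupport F).card : ℝ)) := by
          have h1 : (edgeSupport E').card ≤ (edgeSupport E).card + (h - (edgeSupport F).card) :=
            hsupp'
          have h2 : (((edgeSupport E).card + (h - (edgeSupport F).card) : ℕ) : ℝ)
              = ((edgeSupport E).card : ℝ) + ((h : ℝ) - ((edgeSupport F).card : ℝ)) := by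
            push_cast [Nat.cast_sub hvFh]
            ring
          calc ((edgeSupport E').card : ℝ)
              ≤ (((edgeSupport E).card + (h - (edgeSupport F).card) : ℕ) : ℝ) := by
                exact_mod_cast h1
            _ = _ := h2
        have hmul := mul_le_mul_of_nonneg_left hsuppR hm2nn
        push_cast
        nlinarith [hstep, hEcard, hcardR, hPe, hmul]
  -- conclude
  obtain ⟨E, hEG, hEf, hEg, hEsupp, hEcard⟩ :=
    chain (sConst H - 1) (by
      have : 1 ≤ sConst H := by rw [sConst]; omega
      omega)
  refine ⟨E, ?_, hEG⟩
  rw [badEdgeSets, Finset.mem_filter, Finset.mem_powerset]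
  have hfa : ¬ f.IsDiag := by
    rw [allEdges, Finset.mem_filter] at hf1; exact hf1.2
  have hga : ¬ g.IsDiag := by
    rw [allEdges, Finset.mem_filter] at hg1; exact hg1.2
  have hs1 : 1 ≤ sConst H := by rw [sConst]; omega
  refine ⟨fun x hx => hG (hEG hx), three_le_card_edgeSupport hEf hEg hfgne hfa hga, ?_, ?_⟩
  · calc (edgeSupport E).card ≤ (sConst H - 1 + 1) * h := hEsupp
      _ = KConst H := by
          have hssub : sConst H - 1 + 1 = sConst H := by omega
          rw [KConst, hssub]
  · have hcast : ((sConst H - 1 : ℕ) : ℝ) = (sConst H : ℝ) - 1 := by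
      push_cast [Nat.cast_sub hs1]
      ring
    rw [← hcast]
    exact hEcard

end ExtractMain

section Prob

lemma sum_pow_weight {α : Type*} [DecidableEq α] (s : Finset α) (p : ℝ) :
    ∑ t ∈ s.powerset, p ^ t.card * (1 - p) ^ (s.card - t.card) = 1 := by
  have h := Finset.prod_add (fun _ : α => p) (fun _ : α => 1 - p) s
  simp only [Finset.prod_const] at h
  have h2 : ∑ t ∈ s.powerset, p ^ t.card * (1 - p) ^ (s.card - t.card)
      = ∑ t ∈ s.powerset, p ^ t.card * (1 - p) ^ ((s \ t).card) :=
    Finset.sum_congr rfl fun t ht => by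
      rw [Finset.card_sdiff_of_subset (Finset.mem_powerset.1 ht)]
  rw [h2, ← h]
  norm_num

lemma gnpProb_superset {n : ℕ} (p : ℝ) {E : Finset (Sym2 (Fin n))}
    (hE : E ⊆ allEdges n) :
    ∑ G ∈ (allEdges n).powerset,
      (if E ⊆ G then p ^ G.card * (1 - p) ^ ((allEdges n).card - G.card) else 0)
      = p ^ E.card := by
  classical
  rw [Finset.sum_ite, Finset.sum_const_zero, add_zero]
  have hbij : ∑ G ∈ (allEdges n).powerset.filter (fun G => E ⊆ G),
        p ^ G.card * (1 - p) ^ ((allEdges n).card - G.card)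
      = ∑ t ∈ (allEdges n \ E).powerset,
        p ^ (E.card + t.card) * (1 - p) ^ ((allEdges n \ E).card - t.card) := by
    apply Finset.sum_nbij' (fun G => G \ E) (fun t => t ∪ E)
    · intro G hG
      rw [Finset.mem_filter, Finset.mem_powerset] at hG
      rw [Finset.mem_powerset]
      exact Finset.sdiff_subset_sdiff hG.1 (le_refl _)
    · intro t ht
      rw [Finset.mem_powerset] at ht
      rw [Finset.mem_filter, Finset.mem_powerset]
      constructor
      · apply Finset.union_subset _ hE
        exact fun x hx => (Finset.mem_sdiff.1 (ht hx)).1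
      · exact Finset.subset_union_right
    · intro G hG
      rw [Finset.mem_filter, Finset.mem_powerset] at hG
      rw [Finset.sdiff_union_of_subset hG.2]
    · intro t ht
      rw [Finset.mem_powerset] at ht
      rw [Finset.union_sdiff_right]
      apply Finset.sdiff_eq_self_of_disjoint
      apply Finset.disjoint_left.2
      intro x hx
      exact (Finset.mem_sdiff.1 (ht hx)).2
    · intro G hG
      rw [Finset.mem_filter, Finset.mem_powerset] at hG
      have hc : G.card = E.card + (G \ E).card := by
        rw [Finset.card_sdiff_of_subset hG.2]
        have := Finset.card_le_card hG.2
        omega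
      have hc2 : (allEdges n).card - G.card = (allEdges n \ E).card - (G \ E).card := by
        rw [Finset.card_sdiff_of_subset hE, Finset.card_sdiff_of_subset hG.2]
        have h1 := Finset.card_le_card hG.1
        have h2 := Finset.card_le_card hG.2
        omega
      rw [← hc, hc2]
  rw [hbij]
  have : ∀ t ∈ (allEdges n \ E).powerset,
      p ^ (E.card + t.card) * (1 - p) ^ ((allEdges n \ E).card - t.card)
      = p ^ E.card * (p ^ t.card * (1 - p) ^ ((allEdges n \ E).card - t.card)) := by
    intro t ht
    rw [pow_add]
    ring
  rw [Finset.sum_congr rfl this, ← Finset.mul_sum, sum_pow_weight, mul_one]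

lemma gnpProb_le_sum {n : ℕ} {p : ℝ} (hp0 : 0 ≤ p) (hp1 : p ≤ 1)
    (A : Set (Finset (Sym2 (Fin n)))) (B : Finset (Finset (Sym2 (Fin n))))
    (hB : ∀ E ∈ B, E ⊆ allEdges n)
    (hcover : ∀ G ∈ (allEdges n).powerset, G ∈ A → ∃ E ∈ B, E ⊆ G) :
    gnpProb n p A ≤ ∑ E ∈ B, p ^ E.card := by
  classical
  have hw : ∀ G : Finset (Sym2 (Fin n)),
      0 ≤ p ^ G.card * (1 - p) ^ ((allEdges n).card - G.card) := by
    intro G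
    apply mul_nonneg (pow_nonneg hp0 _) (pow_nonneg (by linarith) _)
  have hpoint : ∀ G ∈ (allEdges n).powerset,
      (if G ∈ A then p ^ G.card * (1 - p) ^ ((allEdges n).card - G.card) else 0)
      ≤ ∑ E ∈ B, (if E ⊆ G then p ^ G.card * (1 - p) ^ ((allEdges n).card - G.card) else 0) := by
    intro G hG
    by_cases hGA : G ∈ A
    · rw [if_pos hGA]
      obtain ⟨E₀, hE₀B, hE₀G⟩ := hcover G hG hGA
      calc p ^ G.card * (1 - p) ^ ((allEdges n).card - G.card)
          = (if E₀ ⊆ G then p ^ G.card * (1 - p) ^ ((allEdges n).card - G.card) else 0) := by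
            rw [if_pos hE₀G]
        _ ≤ _ := by
            apply Finset.single_le_sum _ hE₀B
            intro E hE
            split
            · exact hw G
            · exact le_refl 0
    · rw [if_neg hGA]
      apply Finset.sum_nonneg
      intro E hE
      split
      · exact hw G
      · exact le_refl 0
  calc gnpProb n p A
      ≤ ∑ G ∈ (allEdges n).powerset, ∑ E ∈ B,
          (if E ⊆ G then p ^ G.card * (1 - p) ^ ((allEdges n).card - G.card) else 0) :=
        Finset.sum_le_sum hpoint
    _ = ∑ E ∈ B, ∑ G ∈ (allEdges n).powerset,
          (if E ⊆ G then p ^ G.card * (1 - p) ^ ((allEdges n).card - G.card) else 0) :=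
        Finset.sum_comm
    _ = ∑ E ∈ B, p ^ E.card := by
        apply Finset.sum_congr rfl
        intro E hE
        exact gnpProb_superset p (hB E hE)

end Prob

section Count
variable {h : ℕ} {H : SimpleGraph (Fin h)}

lemma edges_within_card {n : ℕ} (W : Finset (Fin n)) :
    ((allEdges n).filter fun e => ∀ v ∈ e, v ∈ W).card ≤ W.card ^ 2 := by
  classical
  have hsub : ((allEdges n).filter fun e => ∀ v ∈ e, v ∈ W)
      ⊆ (W ×ˢ W).image fun ab => s(ab.1, ab.2) := by
    intro e he
    rw [Finset.mem_filter] at he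
    induction e with
    | _ a b =>
      rw [Finset.mem_image]
      exact ⟨(a, b), Finset.mem_product.2 ⟨he.2 a (by simp), he.2 b (by simp)⟩, rfl⟩
  calc ((allEdges n).filter fun e => ∀ v ∈ e, v ∈ W).card
      ≤ ((W ×ˢ W).image fun ab => s(ab.1, ab.2)).card := Finset.card_le_card hsub
    _ ≤ (W ×ˢ W).card := Finset.card_image_le
    _ = W.card ^ 2 := by rw [Finset.card_product]; ring

lemma card_bad_fiber (n u : ℕ) :
    (((badEdgeSets H n).filter fun E => (edgeSupport E).card = u)).card
      ≤ n ^ u * 2 ^ (KConst H ^ 2) := by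
  classical
  by_cases hu : u ≤ KConst H
  swap
  · have : ((badEdgeSets H n).filter fun E => (edgeSupport E).card = u) = ∅ := by
      rw [Finset.filter_eq_empty_iff]
      intro E hE
      rw [badEdgeSets, Finset.mem_filter] at hE
      intro hcon
      omega
    rw [this]; simp
  set T := (badEdgeSets H n).filter fun E => (edgeSupport E).card = u with hT
  have hmaps : ∀ E ∈ T, edgeSupport E ∈ (Finset.univ : Finset (Fin n)).powersetCard u := by
    intro E hE
    rw [hT, Finset.mem_filter] at hE
    rw [Finset.mem_powersetCard]
    exact ⟨Finset.subset_univ _, hE.2⟩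
  have hcard : T.card = ∑ W ∈ (Finset.univ : Finset (Fin n)).powersetCard u,
      ((T.filter fun E => edgeSupport E = W).card) :=
    Finset.card_eq_sum_card_fiberwise hmaps
  have hfiber : ∀ W ∈ (Finset.univ : Finset (Fin n)).powersetCard u,
      (T.filter fun E => edgeSupport E = W).card ≤ 2 ^ (KConst H ^ 2) := by
    intro W hW
    rw [Finset.mem_powersetCard] at hW
    have hsub : (T.filter fun E => edgeSupport E = W)
        ⊆ ((allEdges n).filter fun e => ∀ v ∈ e, v ∈ W).powerset := by
      intro E hE
      rw [Finset.mem_filter, hT, Finset.mem_filter] at hE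
      obtain ⟨⟨hbad, -⟩, hEW⟩ := hE
      rw [badEdgeSets, Finset.mem_filter, Finset.mem_powerset] at hbad
      rw [Finset.mem_powerset]
      intro e heE
      rw [Finset.mem_filter]
      refine ⟨hbad.1 heE, ?_⟩
      intro v hv
      rw [← hEW, mem_edgeSupport]
      exact ⟨e, heE, hv⟩
    calc (T.filter fun E => edgeSupport E = W).card
        ≤ ((allEdges n).filter fun e => ∀ v ∈ e, v ∈ W).powerset.card :=
          Finset.card_le_card hsub
      _ = 2 ^ ((allEdges n).filter fun e => ∀ v ∈ e, v ∈ W).card :=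
          Finset.card_powerset _
      _ ≤ 2 ^ (KConst H ^ 2) := by
          apply Nat.pow_le_pow_right (by omega)
          calc ((allEdges n).filter fun e => ∀ v ∈ e, v ∈ W).card ≤ W.card ^ 2 :=
              edges_within_card W
            _ ≤ KConst H ^ 2 := by
                apply Nat.pow_le_pow_left
                omega
  calc T.card ≤ ∑ W ∈ (Finset.univ : Finset (Fin n)).powersetCard u, 2 ^ (KConst H ^ 2) := by
        rw [hcard]; exact Finset.sum_le_sum hfiber
    _ = ((Finset.univ : Finset (Fin n)).powersetCard u).card * 2 ^ (KConst H ^ 2) := by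
        rw [Finset.sum_const, smul_eq_mul]
    _ ≤ n ^ u * 2 ^ (KConst H ^ 2) := by
        apply Nat.mul_le_mul_right
        rw [Finset.card_powersetCard]
        simp only [Finset.card_univ, Fintype.card_fin]
        exact Nat.choose_le_pow n u

/-- exponent used in the union bound -/
def rExp {h : ℕ} (H : SimpleGraph (Fin h)) (u : ℕ) : ℝ :=
  m2 H * ((u : ℝ) - 2) + 1 + ((sConst H : ℝ) - 1) * deltaConst H

lemma sum_bad_le (hH : StrictlyTwoBalanced H) (hm : 1 < m2 H) (n : ℕ) {p : ℝ}
    (hp0 : 0 < p) (hp1 : p ≤ 1) :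
    ∑ E ∈ badEdgeSets H n, p ^ E.card
      ≤ ∑ u ∈ Finset.Icc 3 (KConst H),
          ((n : ℝ) ^ u * 2 ^ (KConst H ^ 2)) * p ^ (rExp H u) := by
  classical
  have hmaps : ∀ E ∈ badEdgeSets H n, (edgeSupport E).card ∈ Finset.Icc 3 (KConst H) := by
    intro E hE
    rw [badEdgeSets, Finset.mem_filter] at hE
    rw [Finset.mem_Icc]
    exact ⟨hE.2.1, hE.2.2.1⟩
  rw [← Finset.sum_fiberwise_of_maps_to hmaps]
  apply Finset.sum_le_sum
  intro u hu
  have hterm : ∀ E ∈ (badEdgeSets H n).filter fun E => (edgeSupport E).card = u,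
      p ^ E.card ≤ p ^ (rExp H u) := by
    intro E hE
    rw [Finset.mem_filter] at hE
    obtain ⟨hbad, hEu⟩ := hE
    rw [badEdgeSets, Finset.mem_filter] at hbad
    have hr : rExp H u ≤ (E.card : ℝ) := by
      rw [rExp, ← hEu]
      exact hbad.2.2.2
    calc p ^ E.card = p ^ ((E.card : ℕ) : ℝ) := by
          rw [Real.rpow_natCast]
      _ ≤ p ^ (rExp H u) := Real.rpow_le_rpow_of_exponent_ge hp0 hp1 hr
  calc ∑ E ∈ (badEdgeSets H n).filter (fun E => (edgeSupport E).card = u), p ^ E.card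
      ≤ ∑ E ∈ (badEdgeSets H n).filter (fun E => (edgeSupport E).card = u), p ^ (rExp H u) :=
        Finset.sum_le_sum hterm
    _ = (((badEdgeSets H n).filter fun E => (edgeSupport E).card = u).card : ℝ)
          * p ^ (rExp H u) := by
        rw [Finset.sum_const, nsmul_eq_mul]
    _ ≤ ((n : ℝ) ^ u * 2 ^ (KConst H ^ 2)) * p ^ (rExp H u) := by
        apply mul_le_mul_of_nonneg_right _ (Real.rpow_nonneg (le_of_lt hp0) _)
        calc (((badEdgeSets H n).filter fun E => (edgeSupport E).card = u).card : ℝ)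
            ≤ ((n ^ u * 2 ^ (KConst H ^ 2) : ℕ) : ℝ) := by
              exact_mod_cast card_bad_fiber n u
          _ = (n : ℝ) ^ u * 2 ^ (KConst H ^ 2) := by push_cast; ring

end Count

lemma gnpProb_nonneg {n : ℕ} {p : ℝ} (hp0 : 0 ≤ p) (hp1 : p ≤ 1)
    (A : Set (Finset (Sym2 (Fin n)))) : 0 ≤ gnpProb n p A := by
  apply Finset.sum_nonneg
  intro G hG
  split
  · exact mul_nonneg (pow_nonneg hp0 _) (pow_nonneg (by linarith) _)
  · exact le_refl 0


set_option maxHeartbeats 2000000 in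
/-- Whp `Δ⁽²⁾_H < D` for a constant `D = D(H)`. -/
theorem deltaH2_bounded {h : ℕ} (H : SimpleGraph (Fin h)) (hH : StrictlyTwoBalanced H)
    (hm : 1 < m2 H) :
    ∃ D : ℝ, ∀ C : ℝ, 0 < C → ∃ c₀ : ℝ, 0 < c₀ ∧ ∀ c : ℝ, 0 < c → c ≤ c₀ →
      Tendsto (fun k : ℕ =>
          gnpProb ⌊c * ((k : ℝ) / Real.log k) ^ m2 H⌋₊ (C * Real.log k / k)
            {G | D ≤ (deltaH2 H G : ℝ)})
        atTop (nhds 0) := by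
  classical
  refine ⟨((KConst H ^ h + 1 : ℕ) : ℝ), ?_⟩
  intro C hC
  refine ⟨1, one_pos, ?_⟩
  intro c hc _
  have hδ := deltaConst_pos hH hm
  have hm2pos : (0 : ℝ) < m2 H := lt_trans one_pos hm
  have hsδ : 2 * m2 H ≤ ((sConst H : ℝ) - 1) * deltaConst H := by
    have hcast : ((sConst H : ℝ) - 1) = (⌈2 * m2 H / deltaConst H⌉₊ : ℝ) := by
      rw [sConst]; push_cast; ring
    rw [hcast]
    calc 2 * m2 H = (2 * m2 H / deltaConst H) * deltaConst H := by field_simp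
      _ ≤ (⌈2 * m2 H / deltaConst H⌉₊ : ℝ) * deltaConst H := by
          apply mul_le_mul_of_nonneg_right (Nat.le_ceil _) (le_of_lt hδ)
  set pf : ℕ → ℝ := fun k => C * Real.log k / k with hpf
  set xf : ℕ → ℝ := fun k => Real.log k / k with hxf
  set nf : ℕ → ℕ := fun k => ⌊c * ((k : ℝ) / Real.log k) ^ m2 H⌋₊ with hnf
  have hx0 : Tendsto xf atTop (nhds 0) := by
    have h1 : Tendsto (fun x : ℝ => Real.log x / x) atTop (nhds 0) := by
      have := Real.isLittleO_log_id_atTop.tendsto_div_nhds_zero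
      simpa using this
    exact h1.comp tendsto_natCast_atTop_atTop
  have hp0t : Tendsto pf atTop (nhds 0) := by
    have h2 : pf = fun k => C * xf k := by
      funext k
      simp only [hpf, hxf]
      ring
    rw [h2]
    simpa using hx0.const_mul C
  have hevp1 : ∀ᶠ k : ℕ in atTop, pf k ≤ 1 :=
    (hp0t.eventually_lt_const one_pos).mono fun k hk => le_of_lt hk
  have hevlog : ∀ᶠ k : ℕ in atTop, (1 : ℝ) ≤ Real.log k := by
    filter_upwards [eventually_ge_atTop 3] with k hk
    have hk3 : (3 : ℝ) ≤ (k : ℝ) := by exact_mod_cast hk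
    rw [Real.le_log_iff_exp_le (by linarith)]
    have := Real.exp_one_lt_d9
    linarith
  -- key eventual facts bundled
  have hkey : ∀ᶠ k : ℕ in atTop,
      (0 < (k : ℝ)) ∧ (1 : ℝ) ≤ Real.log k ∧ pf k ≤ 1 := by
    filter_upwards [eventually_ge_atTop 1, hevlog, hevp1] with k h1 h2 h3
    exact ⟨by exact_mod_cast Nat.lt_of_lt_of_le Nat.zero_lt_one h1, h2, h3⟩
  -- bounding function
  set gb : ℕ → ℝ := fun k => ∑ u ∈ Finset.Icc 3 (KConst H),
      ((nf k : ℝ) ^ u * 2 ^ (KConst H ^ 2)) * (pf k) ^ (rExp H u) with hgb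
  -- eventual nonnegativity of gnpProb
  have hlow : ∀ᶠ k : ℕ in atTop,
      0 ≤ gnpProb (nf k) (pf k) {G | ((KConst H ^ h + 1 : ℕ) : ℝ) ≤ (deltaH2 H G : ℝ)} := by
    filter_upwards [hkey] with k ⟨hk0, hlog, hp1⟩
    apply gnpProb_nonneg _ hp1
    rw [hpf]
    apply div_nonneg (mul_nonneg (le_of_lt hC) (by linarith)) (le_of_lt hk0)
  -- eventual upper bound
  have hup : ∀ᶠ k : ℕ in atTop,
      gnpProb (nf k) (pf k) {G | ((KConst H ^ h + 1 : ℕ) : ℝ) ≤ (deltaH2 H G : ℝ)} ≤ gb k := by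
    filter_upwards [hkey] with k ⟨hk0, hlog, hp1⟩
    have hp0 : 0 < pf k := by
      rw [hpf]
      apply div_pos (mul_pos hC (by linarith)) hk0
    calc gnpProb (nf k) (pf k) {G | ((KConst H ^ h + 1 : ℕ) : ℝ) ≤ (deltaH2 H G : ℝ)}
        ≤ ∑ E ∈ badEdgeSets H (nf k), (pf k) ^ E.card := by
          apply gnpProb_le_sum (le_of_lt hp0) hp1
          · intro E hE
            rw [badEdgeSets, Finset.mem_filter, Finset.mem_powerset] at hE
            exact hE.1
          · intro G hG hGA
            rw [Set.mem_setOf_eq] at hGA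
            have hD : KConst H ^ h + 1 ≤ deltaH2 H G := by exact_mod_cast hGA
            obtain ⟨E, hEbad, hEG⟩ := extract hH hm (Finset.mem_powerset.1 hG) hD
            exact ⟨E, hEbad, hEG⟩
      _ ≤ gb k := sum_bad_le hH hm (nf k) hp0 hp1
  -- the bounding function tends to 0
  have hgb0 : Tendsto gb atTop (nhds 0) := by
    rw [hgb]
    have : Tendsto (fun k => ∑ u ∈ Finset.Icc 3 (KConst H),
        ((nf k : ℝ) ^ u * 2 ^ (KConst H ^ 2)) * (pf k) ^ (rExp H u)) atTop
        (nhds (∑ u ∈ Finset.Icc 3 (KConst H), (0 : ℝ))) := by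
      apply tendsto_finset_sum
      intro u hu
      -- each term tends to 0
      set A : ℝ := c ^ u * 2 ^ (KConst H ^ 2) * C ^ (rExp H u) with hA
      have hA0 : 0 ≤ A := by
        rw [hA]
        have : (0:ℝ) ≤ C ^ (rExp H u) := Real.rpow_nonneg (le_of_lt hC) _
        positivity
      apply squeeze_zero' (g := fun k => A * xf k)
      · filter_upwards [hkey] with k ⟨hk0, hlog, hp1⟩
        have hp0 : 0 ≤ pf k := by
          rw [hpf]
          apply div_nonneg (mul_nonneg (le_of_lt hC) (by linarith)) (le_of_lt hk0)
        have : (0:ℝ) ≤ (pf k) ^ (rExp H u) := Real.rpow_nonneg hp0 _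
        positivity
      · filter_upwards [hkey] with k ⟨hk0, hlog, hp1⟩
        have hlogpos : (0:ℝ) < Real.log k := by linarith
        have hxpos : 0 < xf k := div_pos hlogpos hk0
        have hxle1 : xf k ≤ 1 := by
          rw [hxf, div_le_one hk0]
          exact Real.log_le_self (le_of_lt hk0)
        have hinv : ((k : ℝ) / Real.log k) = (xf k)⁻¹ := by
          rw [hxf, inv_div]
        -- bound on nf
        have h1 : (nf k : ℝ) ≤ c * (xf k) ^ (-(m2 H)) := by
          simp only [hnf]
          rw [hinv]
          calc ((⌊c * ((xf k)⁻¹) ^ m2 H⌋₊ : ℕ) : ℝ) ≤ c * ((xf k)⁻¹) ^ m2 H :=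
              Nat.floor_le (by positivity)
            _ = c * (xf k) ^ (-(m2 H)) := by
              congr 1
              rw [Real.inv_rpow (le_of_lt hxpos), ← Real.rpow_neg (le_of_lt hxpos)]
        have h1u : (nf k : ℝ) ^ u ≤ c ^ u * (xf k) ^ (-(m2 H * u)) := by
          calc (nf k : ℝ) ^ u ≤ (c * (xf k) ^ (-(m2 H))) ^ u :=
              pow_le_pow_left₀ (by positivity) h1 u
            _ = c ^ u * ((xf k) ^ (-(m2 H))) ^ u := mul_pow _ _ _
            _ = c ^ u * (xf k) ^ (-(m2 H * u)) := by
                rw [← Real.rpow_natCast ((xf k) ^ (-(m2 H))) u,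
                  ← Real.rpow_mul (le_of_lt hxpos)]
                congr 2
                ring
        have h2 : (pf k) ^ (rExp H u) = C ^ (rExp H u) * (xf k) ^ (rExp H u) := by
          have : pf k = C * xf k := by rw [hpf, hxf]; ring
          rw [this, Real.mul_rpow (le_of_lt hC) (le_of_lt hxpos)]
        have h3 : (xf k) ^ (-(m2 H * u)) * (xf k) ^ (rExp H u)
            = (xf k) ^ (rExp H u - m2 H * u) := by
          rw [← Real.rpow_add hxpos]
          congr 1
          ring
        have hexp : (1 : ℝ) ≤ rExp H u - m2 H * u := by
          rw [rExp]
          nlinarith [hsδ]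
        have h4 : (xf k) ^ (rExp H u - m2 H * u) ≤ xf k := by
          calc (xf k) ^ (rExp H u - m2 H * u) ≤ (xf k) ^ (1:ℝ) :=
              Real.rpow_le_rpow_of_exponent_ge hxpos hxle1 hexp
            _ = xf k := Real.rpow_one _
        have hCr : (0:ℝ) ≤ C ^ (rExp H u) := Real.rpow_nonneg (le_of_lt hC) _
        have hxr : (0:ℝ) ≤ (xf k) ^ (rExp H u) := Real.rpow_nonneg (le_of_lt hxpos) _
        calc (nf k : ℝ) ^ u * 2 ^ (KConst H ^ 2) * (pf k) ^ (rExp H u)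
            = ((nf k : ℝ) ^ u * 2 ^ (KConst H ^ 2)) * (C ^ (rExp H u) * (xf k) ^ (rExp H u)) := by
              rw [h2]
          _ ≤ ((c ^ u * (xf k) ^ (-(m2 H * u))) * 2 ^ (KConst H ^ 2))
                * (C ^ (rExp H u) * (xf k) ^ (rExp H u)) := by
              apply mul_le_mul_of_nonneg_right _ (mul_nonneg hCr hxr)
              apply mul_le_mul_of_nonneg_right h1u (by positivity)
          _ = A * ((xf k) ^ (-(m2 H * u)) * (xf k) ^ (rExp H u)) := by
              rw [hA]; ring
          _ = A * (xf k) ^ (rExp H u - m2 H * u) := by rw [h3]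
          _ ≤ A * xf k := mul_le_mul_of_nonneg_left h4 hA0
      · have := hx0.const_mul A
        simpa using this
    simpa using this
  exact squeeze_zero' hlow hup hgb0
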